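/- Let X be a finite ground set, w : X → ℝ a weight function, and B, G ⊆ X disjoint finite sets such that w(b) ≥ w(g) for every b ∈ B and g ∈ G. Let A ⊆ B ∪ G with |A| ≤ |B|. Then there exists a set B'' ⊆ B \ A with |B''| = |B \ A| − |A ∩ G| such that Σ_{x ∈ (B ∪ G) \ A} w(x) ≥ Σ_{x ∈ B''} w(x) + Σ_{g ∈ G} w(g). -/
import Mathlib

/-- If `|S| = |T|` and every element of `S` dominates every element of `T`,
then the sum over `T` is at most the sum over `S`. -/
lemma sum_le_sum_of_card_eq_of_dom {X : Type*} [DecidableEq X] (w : X → ℝ)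
    (S T : Finset X) (hcard : S.card = T.card)
    (h : ∀ s ∈ S, ∀ t ∈ T, w t ≤ w s) :
    ∑ t ∈ T, w t ≤ ∑ s ∈ S, w s := by
  rcases S.eq_empty_or_nonempty with rfl | hS
  · have : T = ∅ := Finset.card_eq_zero.mp (by simpa using hcard.symm)
    simp [this]
  · set m := S.inf' hS w with hm
    have h1 : ∑ t ∈ T, w t ≤ T.card • m := by
      apply Finset.sum_le_card_nsmul
      intro t ht
      exact Finset.le_inf' hS w fun s hs => h s hs t ht
    have h2 : S.card • m ≤ ∑ s ∈ S, w s := by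
      apply Finset.card_nsmul_le_sum
      intro s hs
      exact Finset.inf'_le w hs
    calc ∑ t ∈ T, w t ≤ T.card • m := h1
      _ = S.card • m := by rw [hcard]
      _ ≤ ∑ s ∈ S, w s := h2

/-- The bait-compensation exchange argument (steps (8)–(10) in the paper's proof of
Theorem 2): the surviving bait actions `B \ A`, whose weights dominate all greedy-action
weights, compensate for the attacked greedy actions `A ∩ G`. -/
theorem bait_compensation_exchange
    {X : Type*} [Fintype X] [DecidableEq X]
    (w : X → ℝ) (B G : Finset X)
    (hdisj : Disjoint B G)
    (hdom : ∀ b ∈ B, ∀ g ∈ G, w b ≥ w g)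
    (A : Finset X) (hA : A ⊆ B ∪ G) (hAcard : A.card ≤ B.card) :
    ∃ B'' ⊆ B \ A, B''.card = (B \ A).card - (A ∩ G).card ∧
      ∑ x ∈ (B ∪ G) \ A, w x ≥ (∑ x ∈ B'', w x) + ∑ g ∈ G, w g := by
  -- |A ∩ G| ≤ |B \ A|
  have hsplit : (A ∩ B).card + (A ∩ G).card = A.card := by
    rw [← Finset.card_union_of_disjoint
      (hdisj.mono (Finset.inter_subset_right) (Finset.inter_subset_right)),
      ← Finset.inter_union_distrib_left, Finset.inter_eq_left.mpr hA]
  have hBA : (B \ A).card = B.card - (A ∩ B).card := by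
    have := Finset.card_sdiff_add_card_inter B A
    rw [Finset.inter_comm] at this
    omega
  have hle : (A ∩ G).card ≤ (B \ A).card := by
    rw [hBA]
    omega
  -- choose S ⊆ B \ A with |S| = |A ∩ G|
  obtain ⟨S, hSsub, hScard⟩ := Finset.exists_subset_card_eq hle
  refine ⟨(B \ A) \ S, Finset.sdiff_subset, ?_, ?_⟩
  · rw [Finset.card_sdiff_of_subset hSsub, hScard]
  · have hdisjBG : Disjoint (B \ A) (G \ A) :=
      (hdisj.mono Finset.sdiff_subset Finset.sdiff_subset)
    have hunion : (B ∪ G) \ A = (B \ A) ∪ (G \ A) := Finset.union_sdiff_distrib _ _ _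
    rw [hunion, Finset.sum_union hdisjBG]
    -- G = (G \ A) ∪ (A ∩ G)
    have hG : ∑ g ∈ G, w g = ∑ g ∈ G \ A, w g + ∑ g ∈ A ∩ G, w g := by
      rw [← Finset.sum_union (Finset.sdiff_disjoint.mono_right Finset.inter_subset_left)]
      congr 1
      rw [Finset.inter_comm]
      exact (Finset.sdiff_union_inter G A).symm
    -- B \ A = ((B\A)\S) ∪ S
    have hB : ∑ x ∈ B \ A, w x = ∑ x ∈ (B \ A) \ S, w x + ∑ x ∈ S, w x := by
      rw [← Finset.sum_union Finset.sdiff_disjoint, Finset.sdiff_union_of_subset hSsub]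
    have hSdom : ∑ g ∈ A ∩ G, w g ≤ ∑ s ∈ S, w s := by
      apply sum_le_sum_of_card_eq_of_dom w S (A ∩ G) hScard
      intro s hs t ht
      exact hdom s ((Finset.sdiff_subset) (hSsub hs)) t (Finset.inter_subset_right ht)
    rw [hB, hG]
    linarith
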